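/- Let n > 2 be an integer and let q ∈ B_n be non-constant. If f ∈ B_n is a balanced q-nearly bent function, then there exists a matrix A_0 ∈ GL_n such that |W_q(f)(A_0)| = ρ_q (i.e., the bound ρ_q is attained at some invertible matrix). -/

import Mathlib

open Finset Matrix

/-- Hamming weight of a Boolean function on `𝔽₂ⁿ`. -/
def wt {n : ℕ} (f : (Fin n → ZMod 2) → ZMod 2) : ℕ :=
  (Finset.univ.filter fun a => f a = 1).card

/-- Imbalance `I_f = Σ_a (-1)^{f(a)}`. -/
def imb {n : ℕ} (f : (Fin n → ZMod 2) → ZMod 2) : ℤ :=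
  ∑ a : Fin n → ZMod 2, (-1 : ℤ) ^ (f a).val

/-- q-transform coefficient `W_q(f)(A) = Σ_a (-1)^{f(a)+q(aA)}` (for `A` a matrix;
invertibility is imposed at use sites via `GL`). -/
def Wq {n : ℕ} (q f : (Fin n → ZMod 2) → ZMod 2)
    (A : Matrix (Fin n) (Fin n) (ZMod 2)) : ℤ :=
  ∑ a : Fin n → ZMod 2, (-1 : ℤ) ^ (f a + q (Matrix.vecMul a A)).val

/-- `ρ_q = ⌈ ((2^{2n} - I_q²)/(2^n - 1))^{1/2} ⌉`. -/
noncomputable def rho {n : ℕ} (q : (Fin n → ZMod 2) → ZMod 2) : ℤ :=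
  ⌈Real.sqrt (((2 : ℝ) ^ (2 * n) - (imb q : ℝ) ^ 2) / ((2 : ℝ) ^ n - 1))⌉

/-- `f` is affine: `f(x) = v·x + c`. -/
def IsAffine {n : ℕ} (f : (Fin n → ZMod 2) → ZMod 2) : Prop :=
  ∃ (v : Fin n → ZMod 2) (c : ZMod 2), ∀ x, f x = (∑ i, v i * x i) + c

variable {n : ℕ}


lemma zmod2_cases : ∀ c : ZMod 2, c = 0 ∨ c = 1 := by decide

lemma exists_basis_pair (a b : Fin n → ZMod 2) (ha : a ≠ 0) (hb : b ≠ 0)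
    (hab : a ≠ b) (i0 i1 : Fin n) (h01 : i0 ≠ i1) :
    ∃ B : Module.Basis (Fin n) (ZMod 2) (Fin n → ZMod 2), B i0 = a ∧ B i1 = b := by
  classical
  have hanb : a ∉ ({b} : Set (Fin n → ZMod 2)) := by simpa using hab
  have li : LinearIndepOn (ZMod 2) id ({a, b} : Set (Fin n → ZMod 2)) := by
    rw [show ({a, b} : Set (Fin n → ZMod 2)) = insert a {b} from rfl,
      linearIndepOn_id_insert hanb]
    refine ⟨(linearIndepOn_singleton_iff (ZMod 2)).mpr hb, ?_⟩
    intro h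
    rw [Submodule.mem_span_singleton] at h
    obtain ⟨c, hc⟩ := h
    rcases zmod2_cases c with rfl | rfl
    · rw [zero_smul] at hc; exact ha hc.symm
    · rw [one_smul] at hc; exact hab hc.symm
  have ha' : a ∈ li.extend (Set.subset_univ _) := li.subset_extend _ (Set.mem_insert _ _)
  have hb' : b ∈ li.extend (Set.subset_univ _) := li.subset_extend _ (Set.mem_insert_of_mem _ rfl)
  haveI : Fintype ↥(li.extend (Set.subset_univ _)) := Fintype.ofFinite _
  have hcard : Fintype.card ↥(li.extend (Set.subset_univ _)) = n := by
    have h1 := Module.finrank_eq_card_basis (Module.Basis.extend li)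
    have h2 : Module.finrank (ZMod 2) (Fin n → ZMod 2) = n := by
      simp [Module.finrank_pi]
    omega
  obtain ⟨e⟩ : Nonempty (Fin n ≃ ↥(li.extend (Set.subset_univ _))) :=
    ⟨(Fintype.equivFinOfCardEq hcard).symm⟩
  set i := e.symm ⟨a, ha'⟩ with hi
  set j := e.symm ⟨b, hb'⟩ with hj
  have hij : i ≠ j := by
    intro h
    have := congrArg e h
    rw [hi, hj, Equiv.apply_symm_apply, Equiv.apply_symm_apply] at this
    exact hab (congrArg Subtype.val this)
  set τ : Equiv.Perm (Fin n) := Equiv.swap i0 i with hτ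
  set k := τ.symm j with hk
  have hk0 : k ≠ i0 := by
    intro h
    apply hij
    have : j = τ i0 := by rw [← h, hk]; simp
    rw [this, hτ, Equiv.swap_apply_left]
  set σ : Equiv.Perm (Fin n) := Equiv.swap i1 k with hσ
  set F : Fin n ≃ ↥(li.extend (Set.subset_univ _)) := (σ.trans τ).trans e with hF
  have hF0 : F i0 = ⟨a, ha'⟩ := by
    have hσ0 : σ i0 = i0 := Equiv.swap_apply_of_ne_of_ne h01 (Ne.symm hk0)
    have : F i0 = e (τ (σ i0)) := rfl
    rw [this, hσ0, hτ, Equiv.swap_apply_left, hi, Equiv.apply_symm_apply]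
  have hF1 : F i1 = ⟨b, hb'⟩ := by
    have hσ1 : σ i1 = k := by rw [hσ, Equiv.swap_apply_left]
    have : F i1 = e (τ (σ i1)) := rfl
    rw [this, hσ1, hk, Equiv.apply_symm_apply, hj, Equiv.apply_symm_apply]
  refine ⟨(Module.Basis.extend li).reindex F.symm, ?_, ?_⟩
  · rw [Module.Basis.reindex_apply, Equiv.symm_symm, hF0, Module.Basis.extend_apply_self]
  · rw [Module.Basis.reindex_apply, Equiv.symm_symm, hF1, Module.Basis.extend_apply_self]

lemma exists_gl_pair (hn : 2 ≤ n) (a b c d : Fin n → ZMod 2)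
    (ha : a ≠ 0) (hb : b ≠ 0) (hab : a ≠ b)
    (hc : c ≠ 0) (hd : d ≠ 0) (hcd : c ≠ d) :
    ∃ M : GL (Fin n) (ZMod 2), Matrix.vecMul a M.val = c ∧ Matrix.vecMul b M.val = d := by
  classical
  have h01 : (⟨0, by omega⟩ : Fin n) ≠ ⟨1, by omega⟩ := by
    intro h; exact absurd (congrArg Fin.val h) (by simp)
  obtain ⟨B1, hB1a, hB1b⟩ := exists_basis_pair a b ha hb hab ⟨0, by omega⟩ ⟨1, by omega⟩ h01
  obtain ⟨B2, hB2a, hB2b⟩ := exists_basis_pair c d hc hd hcd ⟨0, by omega⟩ ⟨1, by omega⟩ h01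
  set L := B1.equiv B2 (Equiv.refl _) with hL
  have hLa : L a = c := by rw [← hB1a, hL, Module.Basis.equiv_apply, Equiv.refl_apply, hB2a]
  have hLb : L b = d := by rw [← hB1b, hL, Module.Basis.equiv_apply, Equiv.refl_apply, hB2b]
  set M0 := LinearMap.toMatrix' (L : (Fin n → ZMod 2) →ₗ[ZMod 2] (Fin n → ZMod 2)) with hM0
  set N0 := LinearMap.toMatrix' (L.symm : (Fin n → ZMod 2) →ₗ[ZMod 2] (Fin n → ZMod 2)) with hN0
  have hMN : M0 * N0 = 1 := by
    rw [hM0, hN0, ← LinearMap.toMatrix'_comp]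
    have : (L : (Fin n → ZMod 2) →ₗ[ZMod 2] _) ∘ₗ (L.symm : (Fin n → ZMod 2) →ₗ[ZMod 2] _)
        = LinearMap.id := by ext x; simp
    rw [this, LinearMap.toMatrix'_id]
  have hNM : N0 * M0 = 1 := by
    rw [hM0, hN0, ← LinearMap.toMatrix'_comp]
    have : (L.symm : (Fin n → ZMod 2) →ₗ[ZMod 2] _) ∘ₗ (L : (Fin n → ZMod 2) →ₗ[ZMod 2] _)
        = LinearMap.id := by ext x; simp
    rw [this, LinearMap.toMatrix'_id]
  refine ⟨⟨M0ᵀ, N0ᵀ, ?_, ?_⟩, ?_, ?_⟩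
  · rw [← Matrix.transpose_mul, hNM, Matrix.transpose_one]
  · rw [← Matrix.transpose_mul, hMN, Matrix.transpose_one]
  · show Matrix.vecMul a M0ᵀ = c
    rw [Matrix.vecMul_transpose, hM0, ← Matrix.toLin'_apply, Matrix.toLin'_toMatrix']
    exact hLa
  · show Matrix.vecMul b M0ᵀ = d
    rw [Matrix.vecMul_transpose, hM0, ← Matrix.toLin'_apply, Matrix.toLin'_toMatrix']
    exact hLb

def sgn (x : ZMod 2) : ℤ := (-1) ^ x.val

lemma sgn_add : ∀ x y : ZMod 2, sgn (x + y) = sgn x * sgn y := by decide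
lemma sgn_mul_self : ∀ x : ZMod 2, sgn x * sgn x = 1 := by decide

lemma vecMul_gl_inj (A : GL (Fin n) (ZMod 2)) {x y : Fin n → ZMod 2}
    (h : x ᵥ* A.val = y ᵥ* A.val) : x = y := by
  have h2 := congrArg (fun v => v ᵥ* ((A⁻¹ : GL (Fin n) (ZMod 2)) : Matrix (Fin n) (Fin n) (ZMod 2))) h
  simp only [Matrix.vecMul_vecMul] at h2
  rw [show (A : Matrix (Fin n) (Fin n) (ZMod 2)) * ((A⁻¹ : GL (Fin n) (ZMod 2)) : Matrix (Fin n) (Fin n) (ZMod 2)) = 1 from A.mul_inv, Matrix.vecMul_one, Matrix.vecMul_one] at h2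
  exact h2

lemma sum_fiber_const {α β : Type*} [Fintype α] [DecidableEq β] (Φ : α → β) (P : Finset β)
    (hP : ∀ x, Φ x ∈ P) (k : ℕ)
    (hk : ∀ p ∈ P, (Finset.univ.filter fun x => Φ x = p).card = k)
    (g : β → ℤ) : ∑ x, g (Φ x) = k * ∑ p ∈ P, g p := by
  rw [← Finset.sum_fiberwise_of_maps_to (fun x _ => hP x) (fun x => g (Φ x))]
  rw [Finset.mul_sum]
  refine Finset.sum_congr rfl fun p hp => ?_
  have : ∀ x ∈ Finset.univ.filter fun x => Φ x = p, g (Φ x) = g p := by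
    intro x hx
    rw [Finset.mem_filter] at hx
    rw [hx.2]
  rw [Finset.sum_congr rfl this, Finset.sum_const, hk p hp]
  simp [mul_comm]

lemma card_P1 (hn : 1 ≤ n) :
    (((Finset.univ : Finset (Fin n → ZMod 2)).filter fun c => c ≠ 0).card : ℤ)
      = 2 ^ n - 1 := by
  classical
  rw [Finset.filter_ne']
  rw [Finset.card_erase_of_mem (Finset.mem_univ _)]
  have hcard : Fintype.card (Fin n → ZMod 2) = 2 ^ n := by
    simp [Fintype.card_fun]
  rw [Finset.card_univ, hcard]
  have : 1 ≤ 2 ^ n := Nat.one_le_two_pow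
  push_cast [this]
  ring

lemma fiber_eq (c : Fin n → ZMod 2) :
    ((Finset.univ : Finset (Fin n → ZMod 2)).filter fun d => d ≠ 0 ∧ c ≠ d)
      = ((Finset.univ : Finset (Fin n → ZMod 2)).erase 0).erase c := by
  ext d
  simp only [Finset.mem_filter, Finset.mem_univ, true_and, Finset.mem_erase]
  constructor
  · rintro ⟨h1, h2⟩; exact ⟨Ne.symm h2, h1, trivial⟩
  · rintro ⟨h1, h2, _⟩; exact ⟨h2, Ne.symm h1⟩

lemma card_P2 (hn : 1 ≤ n) :
    (((Finset.univ : Finset ((Fin n → ZMod 2) × (Fin n → ZMod 2))).filter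
        fun p => p.1 ≠ 0 ∧ p.2 ≠ 0 ∧ p.1 ≠ p.2).card : ℤ)
      = (2 ^ n - 1) * (2 ^ n - 2) := by
  classical
  set P1 : Finset (Fin n → ZMod 2) := Finset.univ.filter fun c => c ≠ 0 with hP1
  have hmaps : ∀ p ∈ (Finset.univ : Finset ((Fin n → ZMod 2) × (Fin n → ZMod 2))).filter
      (fun p => p.1 ≠ 0 ∧ p.2 ≠ 0 ∧ p.1 ≠ p.2), p.1 ∈ P1 := by
    intro p hp
    rw [Finset.mem_filter] at hp
    simp [hP1, hp.2.1]
  rw [Finset.card_eq_sum_card_fiberwise hmaps]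
  have hfib : ∀ c ∈ P1,
      (((Finset.univ : Finset ((Fin n → ZMod 2) × (Fin n → ZMod 2))).filter
        (fun p => p.1 ≠ 0 ∧ p.2 ≠ 0 ∧ p.1 ≠ p.2)).filter fun p => p.1 = c).card
      = 2 ^ n - 2 := by
    intro c hc
    rw [hP1, Finset.mem_filter] at hc
    have himg : (((Finset.univ : Finset ((Fin n → ZMod 2) × (Fin n → ZMod 2))).filter
        (fun p => p.1 ≠ 0 ∧ p.2 ≠ 0 ∧ p.1 ≠ p.2)).filter fun p => p.1 = c)
        = ((Finset.univ : Finset (Fin n → ZMod 2)).filter fun d => d ≠ 0 ∧ c ≠ d).map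
            ⟨fun d => (c, d), fun x y h => (Prod.mk.injEq _ _ _ _ ▸ h).2⟩ := by
      ext p
      simp only [Finset.mem_filter, Finset.mem_univ, true_and, Finset.mem_map,
        Function.Embedding.coeFn_mk]
      constructor
      · rintro ⟨⟨h1, h2, h3⟩, h4⟩
        exact ⟨p.2, ⟨h2, h4 ▸ h3⟩, by rw [← h4]; rfl⟩
      · rintro ⟨d, ⟨hd1, hd2⟩, rfl⟩
        exact ⟨⟨hc.2, hd1, hd2⟩, rfl⟩
    rw [himg, Finset.card_map, fiber_eq]
    rw [Finset.card_erase_of_mem, Finset.card_erase_of_mem (Finset.mem_univ _)]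
    · rw [Finset.card_univ]
      simp only [Fintype.card_fun, ZMod.card, Fintype.card_fin]
      omega
    · exact Finset.mem_erase.mpr ⟨hc.2, Finset.mem_univ _⟩
  rw [Finset.sum_congr rfl hfib, Finset.sum_const, smul_eq_mul]
  have h2n : 2 ≤ 2 ^ n := by
    calc 2 = 2^1 := rfl
    _ ≤ 2^n := Nat.pow_le_pow_right (by norm_num) hn
  push_cast [Nat.cast_sub h2n]
  rw [← card_P1 hn]

lemma pair_fiber_card (hn : 2 ≤ n) (a b : Fin n → ZMod 2)
    (ha : a ≠ 0) (hb : b ≠ 0) (hab : a ≠ b)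
    (p : (Fin n → ZMod 2) × (Fin n → ZMod 2)) (hp : p.1 ≠ 0 ∧ p.2 ≠ 0 ∧ p.1 ≠ p.2) :
    ((Finset.univ : Finset (GL (Fin n) (ZMod 2))).filter
        fun A => (a ᵥ* A.val, b ᵥ* A.val) = p).card
      = ((Finset.univ : Finset (GL (Fin n) (ZMod 2))).filter
        fun A => (a ᵥ* A.val, b ᵥ* A.val) = (a, b)).card := by
  classical
  obtain ⟨M, hM1, hM2⟩ := exists_gl_pair hn a b p.1 p.2 ha hb hab hp.1 hp.2.1 hp.2.2
  refine Finset.card_bij' (fun A _ => A * M⁻¹) (fun A _ => A * M) ?_ ?_ ?_ ?_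
  · intro A hA
    rw [Finset.mem_filter] at hA ⊢
    obtain ⟨h1, h2⟩ := Prod.mk.injEq _ _ _ _ ▸ hA.2
    refine ⟨Finset.mem_univ _, ?_⟩
    have e1 : a ᵥ* (A * M⁻¹).val = a := by
      rw [Units.val_mul, ← Matrix.vecMul_vecMul, h1, ← hM1, Matrix.vecMul_vecMul,
        show (M : Matrix (Fin n) (Fin n) (ZMod 2)) * ((M⁻¹ : GL (Fin n) (ZMod 2)) : Matrix (Fin n) (Fin n) (ZMod 2)) = 1 from M.mul_inv, Matrix.vecMul_one]
    have e2 : b ᵥ* (A * M⁻¹).val = b := by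
      rw [Units.val_mul, ← Matrix.vecMul_vecMul, h2, ← hM2, Matrix.vecMul_vecMul,
        show (M : Matrix (Fin n) (Fin n) (ZMod 2)) * ((M⁻¹ : GL (Fin n) (ZMod 2)) : Matrix (Fin n) (Fin n) (ZMod 2)) = 1 from M.mul_inv, Matrix.vecMul_one]
    rw [e1, e2]
  · intro A hA
    rw [Finset.mem_filter] at hA ⊢
    obtain ⟨h1, h2⟩ := Prod.mk.injEq _ _ _ _ ▸ hA.2
    refine ⟨Finset.mem_univ _, ?_⟩
    have e1 : a ᵥ* (A * M).val = p.1 := by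
      rw [Units.val_mul, ← Matrix.vecMul_vecMul, h1, hM1]
    have e2 : b ᵥ* (A * M).val = p.2 := by
      rw [Units.val_mul, ← Matrix.vecMul_vecMul, h2, hM2]
    rw [e1, e2]
  · intro A _; show A * M⁻¹ * M = A; rw [mul_assoc, inv_mul_cancel, mul_one]
  · intro A _; show A * M * M⁻¹ = A; rw [mul_assoc, mul_inv_cancel, mul_one]

lemma single_fiber_card (hn : 2 ≤ n) (a : Fin n → ZMod 2) (ha : a ≠ 0)
    (c : Fin n → ZMod 2) (hc : c ≠ 0) :
    ((Finset.univ : Finset (GL (Fin n) (ZMod 2))).filter fun A => a ᵥ* A.val = c).card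
      = ((Finset.univ : Finset (GL (Fin n) (ZMod 2))).filter fun A => a ᵥ* A.val = a).card := by
  classical
  -- find companions
  have hbig : 2 < Fintype.card (Fin n → ZMod 2) := by
    have : (4 : ℕ) ≤ 2 ^ n := by
      calc (4:ℕ) = 2^2 := rfl
      _ ≤ 2^n := Nat.pow_le_pow_right (by norm_num) hn
    simp only [Fintype.card_fun, ZMod.card, Fintype.card_fin]
    omega
  have hcomp : ∀ x : Fin n → ZMod 2, ∃ y, y ≠ 0 ∧ y ≠ x := by
    intro x
    have h1 : ({0, x} : Finset (Fin n → ZMod 2)).card ≤ 2 :=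
      (Finset.card_insert_le _ _).trans (by simp)
    have h2 : 2 < (Finset.univ : Finset (Fin n → ZMod 2)).card := by
      rwa [Finset.card_univ]
    have h3 : 0 < ((Finset.univ : Finset (Fin n → ZMod 2)) \ {0, x}).card := by
      rw [Finset.card_sdiff_of_subset (Finset.subset_univ _)]
      omega
    obtain ⟨y, hy⟩ := Finset.card_pos.mp h3
    rw [Finset.mem_sdiff, Finset.mem_insert, Finset.mem_singleton] at hy
    exact ⟨y, fun h => hy.2 (Or.inl h), fun h => hy.2 (Or.inr h)⟩
  obtain ⟨b, hb0, hba⟩ := hcomp a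
  obtain ⟨d, hd0, hdc⟩ := hcomp c
  obtain ⟨M, hM1, hM2⟩ := exists_gl_pair hn a b c d ha hb0 (Ne.symm hba) hc hd0 (Ne.symm hdc)
  refine Finset.card_bij' (fun A _ => A * M⁻¹) (fun A _ => A * M) ?_ ?_ ?_ ?_
  · intro A hA
    rw [Finset.mem_filter] at hA ⊢
    refine ⟨Finset.mem_univ _, ?_⟩
    rw [Units.val_mul, ← Matrix.vecMul_vecMul, hA.2, ← hM1, Matrix.vecMul_vecMul,
      show (M : Matrix (Fin n) (Fin n) (ZMod 2)) * ((M⁻¹ : GL (Fin n) (ZMod 2)) : Matrix (Fin n) (Fin n) (ZMod 2)) = 1 from M.mul_inv, Matrix.vecMul_one]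
  · intro A hA
    rw [Finset.mem_filter] at hA ⊢
    refine ⟨Finset.mem_univ _, ?_⟩
    rw [Units.val_mul, ← Matrix.vecMul_vecMul, hA.2, hM1]
  · intro A _; show A * M⁻¹ * M = A; rw [mul_assoc, inv_mul_cancel, mul_one]
  · intro A _; show A * M * M⁻¹ = A; rw [mul_assoc, mul_inv_cancel, mul_one]

lemma single_sum (hn : 2 ≤ n) (a : Fin n → ZMod 2) (ha : a ≠ 0) (g : (Fin n → ZMod 2) → ℤ) :
    ((2:ℤ) ^ n - 1) * ∑ A : GL (Fin n) (ZMod 2), g (a ᵥ* A.val)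
      = (Fintype.card (GL (Fin n) (ZMod 2)) : ℤ) *
          ∑ c ∈ (Finset.univ : Finset (Fin n → ZMod 2)).filter (fun c => c ≠ 0), g c := by
  classical
  set P1 := (Finset.univ : Finset (Fin n → ZMod 2)).filter (fun c => c ≠ 0) with hP1
  set k := ((Finset.univ : Finset (GL (Fin n) (ZMod 2))).filter fun A => a ᵥ* A.val = a).card
    with hkdef
  have hP : ∀ A : GL (Fin n) (ZMod 2), a ᵥ* A.val ∈ P1 := by
    intro A
    rw [hP1, Finset.mem_filter]
    refine ⟨Finset.mem_univ _, fun h => ha ?_⟩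
    exact vecMul_gl_inj A (h.trans (Matrix.zero_vecMul A.val).symm)
  have hk : ∀ c ∈ P1, ((Finset.univ : Finset (GL (Fin n) (ZMod 2))).filter
      fun A => a ᵥ* A.val = c).card = k := by
    intro c hc
    rw [hP1, Finset.mem_filter] at hc
    exact single_fiber_card hn a ha c hc.2
  have h1 := sum_fiber_const (fun A : GL (Fin n) (ZMod 2) => a ᵥ* A.val) P1 hP k hk g
  have h2 := sum_fiber_const (fun A : GL (Fin n) (ZMod 2) => a ᵥ* A.val) P1 hP k hk (fun _ => 1)
  simp only [Finset.sum_const, nsmul_eq_mul, mul_one, Finset.card_univ] at h2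
  have h3 : (P1.card : ℤ) = 2 ^ n - 1 := card_P1 (by omega)
  rw [h1, h2, h3]
  ring

lemma pair_sum (hn : 2 ≤ n) (a b : Fin n → ZMod 2) (ha : a ≠ 0) (hb : b ≠ 0) (hab : a ≠ b)
    (g : (Fin n → ZMod 2) → (Fin n → ZMod 2) → ℤ) :
    ((2:ℤ) ^ n - 1) * ((2:ℤ) ^ n - 2) *
        ∑ A : GL (Fin n) (ZMod 2), g (a ᵥ* A.val) (b ᵥ* A.val)
      = (Fintype.card (GL (Fin n) (ZMod 2)) : ℤ) *
          ∑ p ∈ (Finset.univ : Finset ((Fin n → ZMod 2) × (Fin n → ZMod 2))).filter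
            (fun p => p.1 ≠ 0 ∧ p.2 ≠ 0 ∧ p.1 ≠ p.2), g p.1 p.2 := by
  classical
  set P2 := (Finset.univ : Finset ((Fin n → ZMod 2) × (Fin n → ZMod 2))).filter
    (fun p => p.1 ≠ 0 ∧ p.2 ≠ 0 ∧ p.1 ≠ p.2) with hP2
  set k := ((Finset.univ : Finset (GL (Fin n) (ZMod 2))).filter
    fun A => (a ᵥ* A.val, b ᵥ* A.val) = (a, b)).card with hkdef
  have hP : ∀ A : GL (Fin n) (ZMod 2), (a ᵥ* A.val, b ᵥ* A.val) ∈ P2 := by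
    intro A
    rw [hP2, Finset.mem_filter]
    refine ⟨Finset.mem_univ _, fun h => ha ?_, fun h => hb ?_, fun h => hab ?_⟩
    · exact vecMul_gl_inj A (h.trans (Matrix.zero_vecMul A.val).symm)
    · exact vecMul_gl_inj A (h.trans (Matrix.zero_vecMul A.val).symm)
    · exact vecMul_gl_inj A h
  have hk : ∀ p ∈ P2, ((Finset.univ : Finset (GL (Fin n) (ZMod 2))).filter
      fun A => (a ᵥ* A.val, b ᵥ* A.val) = p).card = k := by
    intro p hp
    rw [hP2, Finset.mem_filter] at hp
    exact pair_fiber_card hn a b ha hb hab p hp.2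
  have h1 := sum_fiber_const (fun A : GL (Fin n) (ZMod 2) => (a ᵥ* A.val, b ᵥ* A.val)) P2 hP k hk
    (fun p => g p.1 p.2)
  have h2 := sum_fiber_const (fun A : GL (Fin n) (ZMod 2) => (a ᵥ* A.val, b ᵥ* A.val)) P2 hP k hk
    (fun _ => 1)
  simp only [Finset.sum_const, nsmul_eq_mul, mul_one, Finset.card_univ] at h2
  have h3 : (P2.card : ℤ) = (2 ^ n - 1) * (2 ^ n - 2) := card_P2 (by omega)
  rw [h1, h2, h3]
  ring

lemma imb_eq_sgn (f : (Fin n → ZMod 2) → ZMod 2) : imb f = ∑ a, sgn (f a) := rfl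

lemma sgn_eq_ite : ∀ x : ZMod 2, sgn x = 1 - 2 * (if x = 1 then 1 else 0) := by decide

lemma imb_eq (f : (Fin n → ZMod 2) → ZMod 2) : imb f = 2 ^ n - 2 * (wt f : ℤ) := by
  rw [imb_eq_sgn]
  have : ∀ a ∈ (Finset.univ : Finset (Fin n → ZMod 2)), sgn (f a)
      = 1 - 2 * (if f a = 1 then 1 else 0) := fun a _ => sgn_eq_ite (f a)
  rw [Finset.sum_congr rfl this, Finset.sum_sub_distrib, Finset.sum_const, ← Finset.mul_sum,
    Finset.sum_boole]
  simp only [nsmul_eq_mul, mul_one, Finset.card_univ, Fintype.card_fun, ZMod.card,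
    Fintype.card_fin]
  rw [show wt f = (Finset.univ.filter fun x => f x = 1).card from rfl]
  push_cast
  ring

lemma imb_zero_of_balanced (hn : 1 ≤ n) (f : (Fin n → ZMod 2) → ZMod 2)
    (hbal : wt f = 2 ^ (n - 1)) : imb f = 0 := by
  rw [imb_eq, hbal]
  have h : (2:ℤ) ^ n = 2 * 2 ^ (n - 1) := by
    rw [← pow_succ']
    congr 1
    omega
  rw [h]
  push_cast
  ring

lemma imb_sq_lt (q : (Fin n → ZMod 2) → ZMod 2) (hqnc : ∃ x y, q x ≠ q y) :
    (imb q) ^ 2 < 2 ^ (2 * n) := by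
  obtain ⟨x, y, hxy⟩ := hqnc
  have h1 : 1 ≤ wt q := by
    rw [show wt q = (Finset.univ.filter fun a => q a = 1).card from rfl]
    rw [Nat.one_le_iff_ne_zero, ← Nat.pos_iff_ne_zero, Finset.card_pos]
    rcases zmod2_cases (q x) with hx | hx
    · rcases zmod2_cases (q y) with hy | hy
      · exact absurd (hx.trans hy.symm) hxy
      · exact ⟨y, Finset.mem_filter.mpr ⟨Finset.mem_univ _, hy⟩⟩
    · exact ⟨x, Finset.mem_filter.mpr ⟨Finset.mem_univ _, hx⟩⟩
  have h2 : wt q < 2 ^ n := by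
    have hne : ∃ z, q z ≠ 1 := by
      rcases zmod2_cases (q x) with hx | hx
      · exact ⟨x, by rw [hx]; decide⟩
      · rcases zmod2_cases (q y) with hy | hy
        · exact ⟨y, by rw [hy]; decide⟩
        · exact absurd (hx.trans hy.symm) hxy
    obtain ⟨z, hz⟩ := hne
    have hss : (Finset.univ.filter fun a => q a = 1) ⊂ Finset.univ := by
      rw [Finset.ssubset_univ_iff]
      intro h
      have hz2 : z ∈ Finset.univ.filter fun a => q a = 1 := by rw [h]; exact Finset.mem_univ z
      exact hz (Finset.mem_filter.mp hz2).2
    have hlt := Finset.card_lt_card hss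
    rw [Finset.card_univ, Fintype.card_fun, ZMod.card, Fintype.card_fin] at hlt
    exact hlt
  rw [imb_eq]
  have hpow : (2:ℤ) ^ (2 * n) = (2 ^ n) ^ 2 := by rw [two_mul, pow_add, sq]
  rw [hpow]
  have hw : (1:ℤ) ≤ (wt q : ℤ) := by exact_mod_cast h1
  have hw2 : (wt q : ℤ) < 2 ^ n := by exact_mod_cast (by exact_mod_cast h2 : (wt q:ℤ) < (2:ℤ)^n)
  nlinarith [sq_nonneg ((2:ℤ)^n - 2 * wt q)]

lemma key_identity (hn : 2 < n) (q f : (Fin n → ZMod 2) → ZMod 2) (hf : imb f = 0) :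
    ((2:ℤ) ^ n - 1) * ∑ A : GL (Fin n) (ZMod 2), (Wq q f A.val) ^ 2
      = (Fintype.card (GL (Fin n) (ZMod 2)) : ℤ) * (2 ^ (2 * n) - (imb q) ^ 2) := by
  classical
  have hn2 : 2 ≤ n := by omega
  set G : ℤ := (Fintype.card (GL (Fin n) (ZMod 2)) : ℤ) with hG
  set P1 := (Finset.univ : Finset (Fin n → ZMod 2)).filter (fun c => c ≠ 0) with hP1
  set P2 := (Finset.univ : Finset ((Fin n → ZMod 2) × (Fin n → ZMod 2))).filter
    (fun p => p.1 ≠ 0 ∧ p.2 ≠ 0 ∧ p.1 ≠ p.2) with hP2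
  set T : ℤ := ∑ c ∈ P1, sgn (q c) with hT
  set U : ℤ := ∑ p ∈ P2, sgn (q p.1) * sgn (q p.2) with hU
  set ε : ℤ := sgn (q 0) with hε
  have hP1e : P1 = (Finset.univ : Finset (Fin n → ZMod 2)).erase 0 := Finset.filter_ne' _ _
  have hcard1 : (P1.card : ℤ) = 2 ^ n - 1 := card_P1 (by omega)
  -- imb q = ε + T
  have himbq : imb q = ε + T := by
    rw [imb_eq_sgn, hT, hP1e, hε]
    exact (Finset.add_sum_erase _ (fun a => sgn (q a)) (Finset.mem_univ 0)).symm
  -- U = T^2 - (2^n - 1)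
  have hUval : U = T ^ 2 - (2 ^ n - 1) := by
    rw [hU]
    have hmaps : ∀ p ∈ P2, p.1 ∈ P1 := by
      intro p hp
      rw [hP2, Finset.mem_filter] at hp
      rw [hP1, Finset.mem_filter]
      exact ⟨Finset.mem_univ _, hp.2.1⟩
    rw [← Finset.sum_fiberwise_of_maps_to hmaps (fun p => sgn (q p.1) * sgn (q p.2))]
    have hfib : ∀ c ∈ P1, (∑ p ∈ P2.filter (fun p => p.1 = c), sgn (q p.1) * sgn (q p.2))
        = sgn (q c) * T - 1 := by
      intro c hc
      rw [hP1, Finset.mem_filter] at hc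
      have himg : P2.filter (fun p => p.1 = c)
          = ((Finset.univ : Finset (Fin n → ZMod 2)).filter fun d => d ≠ 0 ∧ c ≠ d).map
              ⟨fun d => (c, d), fun x y h => (Prod.mk.injEq _ _ _ _ ▸ h).2⟩ := by
        rw [hP2]
        ext p
        simp only [Finset.mem_filter, Finset.mem_univ, true_and, Finset.mem_map,
          Function.Embedding.coeFn_mk]
        constructor
        · rintro ⟨⟨h1, h2, h3⟩, h4⟩
          exact ⟨p.2, ⟨h2, h4 ▸ h3⟩, by rw [← h4]; rfl⟩
        · rintro ⟨d, ⟨hd1, hd2⟩, rfl⟩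
          exact ⟨⟨hc.2, hd1, hd2⟩, rfl⟩
      rw [himg, Finset.sum_map]
      change ∑ d ∈ _, sgn (q c) * sgn (q d) = _
      rw [fiber_eq]
      have hcmem : c ∈ (Finset.univ : Finset (Fin n → ZMod 2)).erase 0 :=
        Finset.mem_erase.mpr ⟨hc.2, Finset.mem_univ _⟩
      rw [Finset.sum_erase_eq_sub hcmem, ← hP1e]
      rw [← Finset.mul_sum, ← hT]
      have hms := sgn_mul_self (q c)
      linear_combination (-1 : ℤ) * hms
    rw [Finset.sum_congr rfl hfib, Finset.sum_sub_distrib, ← Finset.sum_mul, ← hT,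
      Finset.sum_const, nsmul_eq_mul, mul_one, hcard1]
    ring
  -- rewrite Wq
  have hWq : ∀ A : GL (Fin n) (ZMod 2),
      Wq q f A.val = ∑ a, sgn (f a) * sgn (q (a ᵥ* A.val)) := by
    intro A
    exact Finset.sum_congr rfl fun a _ => sgn_add _ _
  set D : ℤ := ((2:ℤ) ^ n - 1) * ((2:ℤ) ^ n - 2) with hD
  let N : (Fin n → ZMod 2) → (Fin n → ZMod 2) → ℤ :=
    fun a b => ∑ A : GL (Fin n) (ZMod 2), sgn (q (a ᵥ* A.val)) * sgn (q (b ᵥ* A.val))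
  have hN : ∀ a b, N a b = ∑ A : GL (Fin n) (ZMod 2),
      sgn (q (a ᵥ* A.val)) * sgn (q (b ᵥ* A.val)) := fun a b => rfl
  set X : ℤ := ∑ A : GL (Fin n) (ZMod 2), (Wq q f A.val) ^ 2 with hX
  have hstep1 : X = ∑ a, ∑ b, sgn (f a) * sgn (f b) * N a b := by
    rw [hX]
    have h1 : ∀ A : GL (Fin n) (ZMod 2), (Wq q f A.val) ^ 2
        = ∑ a, ∑ b, (sgn (f a) * sgn (q (a ᵥ* A.val))) * (sgn (f b) * sgn (q (b ᵥ* A.val))) := by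
      intro A
      rw [sq, hWq A, Finset.sum_mul_sum]
    rw [Finset.sum_congr rfl fun A _ => h1 A]
    rw [Finset.sum_comm]
    refine Finset.sum_congr rfl fun a _ => ?_
    rw [Finset.sum_comm]
    refine Finset.sum_congr rfl fun b _ => ?_
    rw [hN a b, Finset.mul_sum]
    exact Finset.sum_congr rfl fun A _ => by ring
  -- evaluate D * N a b
  set C2 : ℤ := D * G - G * U with hC2
  set C3 : ℤ := (2 ^ n - 2) * ε * G * T - G * U with hC3
  have hNval : ∀ a b, D * N a b = G * U + (if a = b then C2 else 0)
      + (if a = 0 ∧ b ≠ 0 then C3 else 0) + (if b = 0 ∧ a ≠ 0 then C3 else 0) := by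
    intro a b
    by_cases hab : a = b
    · subst hab
      have : N a a = G := by
        rw [hN a a]
        have : ∀ A : GL (Fin n) (ZMod 2),
            sgn (q (a ᵥ* A.val)) * sgn (q (a ᵥ* A.val)) = 1 := fun A => sgn_mul_self _
        rw [Finset.sum_congr rfl fun A _ => this A, Finset.sum_const, nsmul_eq_mul, mul_one,
          Finset.card_univ, hG]
      rw [this]
      have h2 : ¬(a = 0 ∧ a ≠ 0) := fun h => h.2 h.1
      rw [if_pos rfl, if_neg h2]
      rw [hC2]; ring
    · by_cases ha0 : a = 0
      · subst ha0
        have hb0 : b ≠ 0 := fun h => hab h.symm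
        have hNv : N 0 b = ε * ∑ A : GL (Fin n) (ZMod 2), sgn (q (b ᵥ* A.val)) := by
          rw [hN 0 b, Finset.mul_sum]
          refine Finset.sum_congr rfl fun A _ => ?_
          rw [Matrix.zero_vecMul, hε]
        have hsing := single_sum hn2 b hb0 (fun c => sgn (q c))
        rw [← hP1, ← hT, ← hG] at hsing
        have h1 : ¬((0:Fin n → ZMod 2) = b) := hab
        have h3 : ¬(b = 0 ∧ (0:Fin n → ZMod 2) ≠ 0) := fun h => h.2 rfl
        rw [if_neg h1, if_neg h3, if_pos ⟨rfl, hb0⟩]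
        rw [hNv, hD, hC3]
        have : ((2:ℤ) ^ n - 1) * ((2:ℤ) ^ n - 2) * (ε * ∑ A : GL (Fin n) (ZMod 2),
            sgn (q (b ᵥ* A.val))) = (2 ^ n - 2) * ε * (((2:ℤ) ^ n - 1) *
            ∑ A : GL (Fin n) (ZMod 2), sgn (q (b ᵥ* A.val))) := by ring
        rw [this, hsing]
        ring
      · by_cases hb0 : b = 0
        · subst hb0
          have hNv : N a 0 = ε * ∑ A : GL (Fin n) (ZMod 2), sgn (q (a ᵥ* A.val)) := by
            rw [hN a 0, Finset.mul_sum]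
            refine Finset.sum_congr rfl fun A _ => ?_
            rw [Matrix.zero_vecMul, hε]
            ring
          have hsing := single_sum hn2 a ha0 (fun c => sgn (q c))
          rw [← hP1, ← hT, ← hG] at hsing
          have h1 : a ≠ (0: Fin n → ZMod 2) := ha0
          have h2 : ¬(a = 0 ∧ (0:Fin n → ZMod 2) ≠ 0) := fun h => ha0 h.1
          rw [if_neg hab, if_neg h2, if_pos ⟨rfl, ha0⟩]
          rw [hNv, hD, hC3]
          have : ((2:ℤ) ^ n - 1) * ((2:ℤ) ^ n - 2) * (ε * ∑ A : GL (Fin n) (ZMod 2),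
              sgn (q (a ᵥ* A.val))) = (2 ^ n - 2) * ε * (((2:ℤ) ^ n - 1) *
              ∑ A : GL (Fin n) (ZMod 2), sgn (q (a ᵥ* A.val))) := by ring
          rw [this, hsing]
          ring
        · have hpair := pair_sum hn2 a b ha0 hb0 hab (fun c d => sgn (q c) * sgn (q d))
          rw [← hP2, ← hU, ← hG] at hpair
          have h2 : ¬(a = 0 ∧ b ≠ 0) := fun h => ha0 h.1
          have h3 : ¬(b = 0 ∧ a ≠ 0) := fun h => hb0 h.1
          rw [if_neg hab, if_neg h2, if_neg h3]
          rw [← hD] at hpair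
          rw [hN a b, hpair]
          ring
  -- sum of sgn f over all = 0
  have hS : ∑ a, sgn (f a) = 0 := by rw [← imb_eq_sgn]; exact hf
  have hSF : ∑ b ∈ P1, sgn (f b) = - sgn (f 0) := by
    rw [hP1e, Finset.sum_erase_eq_sub (Finset.mem_univ 0), hS]
    ring
  -- main sum computation
  have hDX : D * X = 2 ^ n * C2 - 2 * C3 := by
    rw [hstep1, Finset.mul_sum]
    have hsw : ∀ a, D * (∑ b, sgn (f a) * sgn (f b) * N a b)
        = ∑ b, sgn (f a) * sgn (f b) * (D * N a b) := by
      intro a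
      rw [Finset.mul_sum]
      exact Finset.sum_congr rfl fun b _ => by ring
    rw [Finset.sum_congr rfl fun a _ => hsw a]
    have hexp : ∀ a b, sgn (f a) * sgn (f b) * (D * N a b)
        = sgn (f a) * sgn (f b) * (G * U)
          + sgn (f a) * sgn (f b) * (if a = b then C2 else 0)
          + sgn (f a) * sgn (f b) * (if a = 0 ∧ b ≠ 0 then C3 else 0)
          + sgn (f a) * sgn (f b) * (if b = 0 ∧ a ≠ 0 then C3 else 0) := by
      intro a b
      rw [hNval a b]
      ring
    have hsplit : ∀ a, (∑ b, sgn (f a) * sgn (f b) * (D * N a b))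
        = (∑ b, sgn (f a) * sgn (f b) * (G * U))
          + (∑ b, sgn (f a) * sgn (f b) * (if a = b then C2 else 0))
          + (∑ b, sgn (f a) * sgn (f b) * (if a = 0 ∧ b ≠ 0 then C3 else 0))
          + (∑ b, sgn (f a) * sgn (f b) * (if b = 0 ∧ a ≠ 0 then C3 else 0)) := by
      intro a
      rw [← Finset.sum_add_distrib, ← Finset.sum_add_distrib, ← Finset.sum_add_distrib]
      exact Finset.sum_congr rfl fun b _ => hexp a b
    rw [Finset.sum_congr rfl fun a _ => hsplit a]
    rw [Finset.sum_add_distrib, Finset.sum_add_distrib, Finset.sum_add_distrib]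
    -- term 1
    have ht1 : (∑ a, ∑ b, sgn (f a) * sgn (f b) * (G * U)) = 0 := by
      have : ∀ a, (∑ b, sgn (f a) * sgn (f b) * (G * U))
          = (∑ b, sgn (f b)) * (sgn (f a) * (G * U)) := by
        intro a
        rw [Finset.sum_mul]
        exact Finset.sum_congr rfl fun b _ => by ring
      rw [Finset.sum_congr rfl fun a _ => this a]
      rw [hS]
      simp
    -- term 2
    have ht2 : (∑ a, ∑ b, sgn (f a) * sgn (f b) * (if a = b then C2 else 0)) = 2 ^ n * C2 := by
      have hin : ∀ a, (∑ b, sgn (f a) * sgn (f b) * (if a = b then C2 else 0)) = C2 := by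
        intro a
        have : ∀ b, sgn (f a) * sgn (f b) * (if a = b then C2 else 0)
            = if a = b then sgn (f a) * sgn (f b) * C2 else 0 := by
          intro b
          by_cases h : a = b <;> simp [h]
        rw [Finset.sum_congr rfl fun b _ => this b, Finset.sum_ite_eq]
        rw [if_pos (Finset.mem_univ a), sgn_mul_self, one_mul]
      rw [Finset.sum_congr rfl fun a _ => hin a, Finset.sum_const, nsmul_eq_mul,
        Finset.card_univ, Fintype.card_fun, ZMod.card, Fintype.card_fin]
      push_cast
      ring
    -- term 3
    have ht3 : (∑ a, ∑ b, sgn (f a) * sgn (f b) * (if a = 0 ∧ b ≠ 0 then C3 else 0)) = -C3 := by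
      have hin : ∀ a, (∑ b, sgn (f a) * sgn (f b) * (if a = 0 ∧ b ≠ 0 then C3 else 0))
          = if a = 0 then -C3 else 0 := by
        intro a
        by_cases ha : a = 0
        · subst ha
          rw [if_pos rfl]
          have : ∀ b, sgn (f 0) * sgn (f b) * (if (0:Fin n → ZMod 2) = 0 ∧ b ≠ 0 then C3 else 0)
              = if b ≠ 0 then sgn (f 0) * sgn (f b) * C3 else 0 := by
            intro b
            by_cases h : b = 0 <;> simp [h]
          rw [Finset.sum_congr rfl fun b _ => this b, ← Finset.sum_filter, ← hP1]
          have : ∀ b ∈ P1, sgn (f 0) * sgn (f b) * C3 = (sgn (f 0) * C3) * sgn (f b) :=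
            fun b _ => by ring
          rw [Finset.sum_congr rfl this, ← Finset.mul_sum, hSF]
          linear_combination (-C3) * sgn_mul_self (f 0)
        · rw [if_neg ha]
          have : ∀ b, sgn (f a) * sgn (f b) * (if a = 0 ∧ b ≠ 0 then C3 else 0) = 0 := by
            intro b
            rw [if_neg (fun h => ha h.1)]
            ring
          rw [Finset.sum_congr rfl fun b _ => this b, Finset.sum_const, smul_zero]
      rw [Finset.sum_congr rfl fun a _ => hin a, Finset.sum_ite_eq', if_pos (Finset.mem_univ _)]
    -- term 4
    have ht4 : (∑ a, ∑ b, sgn (f a) * sgn (f b) * (if b = 0 ∧ a ≠ 0 then C3 else 0)) = -C3 := by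
      have hin : ∀ a, (∑ b, sgn (f a) * sgn (f b) * (if b = 0 ∧ a ≠ 0 then C3 else 0))
          = if a = 0 then 0 else sgn (f a) * sgn (f 0) * C3 := by
        intro a
        by_cases ha : a = 0
        · subst ha
          rw [if_pos rfl]
          have : ∀ b, sgn (f 0) * sgn (f b) * (if b = 0 ∧ (0:Fin n → ZMod 2) ≠ 0 then C3 else 0)
              = 0 := by
            intro b
            rw [if_neg (fun h => h.2 rfl)]
            ring
          rw [Finset.sum_congr rfl fun b _ => this b, Finset.sum_const, smul_zero]
        · rw [if_neg ha]
          have : ∀ b, sgn (f a) * sgn (f b) * (if b = 0 ∧ a ≠ 0 then C3 else 0)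
              = if b = 0 then sgn (f a) * sgn (f b) * C3 else 0 := by
            intro b
            by_cases h : b = 0 <;> simp [h, ha]
          rw [Finset.sum_congr rfl fun b _ => this b, Finset.sum_ite_eq',
            if_pos (Finset.mem_univ _)]
      rw [Finset.sum_congr rfl fun a _ => hin a]
      have hsplit2 : ∀ a, (if a = 0 then 0 else sgn (f a) * sgn (f 0) * C3)
          = sgn (f a) * sgn (f 0) * C3 - (if a = 0 then sgn (f 0) * sgn (f 0) * C3 else 0) := by
        intro a
        by_cases ha : a = 0 <;> simp [ha]
      rw [Finset.sum_congr rfl fun a _ => hsplit2 a, Finset.sum_sub_distrib,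
        Finset.sum_ite_eq', if_pos (Finset.mem_univ _), sgn_mul_self]
      have : ∀ a ∈ (Finset.univ : Finset (Fin n → ZMod 2)), sgn (f a) * sgn (f 0) * C3
          = (sgn (f 0) * C3) * sgn (f a) := fun a _ => by ring
      rw [Finset.sum_congr rfl this, ← Finset.mul_sum, hS]
      ring
    rw [ht1, ht2, ht3, ht4]
    ring
  -- conclude
  have h2n2 : ((2:ℤ) ^ n - 2) ≠ 0 := by
    have : (2:ℤ) ^ 2 ≤ 2 ^ n := pow_le_pow_right₀ (by norm_num) (by omega)
    norm_num at this ⊢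
    omega
  apply mul_left_cancel₀ h2n2
  have hpow : (2:ℤ) ^ (2 * n) = ((2:ℤ) ^ n) ^ 2 := by rw [two_mul, pow_add, sq]
  rw [hpow, himbq]
  have hε2 : ε * ε = 1 := sgn_mul_self _
  have hlhs : ((2:ℤ) ^ n - 2) * (((2:ℤ) ^ n - 1) * X) = D * X := by rw [hD]; ring
  rw [hlhs, hDX, hC2, hC3, hUval, hD]
  linear_combination ((2:ℤ) ^ n - 2) * G * hε2

/-- If a balanced `f` is `q`-nearly bent, the bound `ρ_q` is attained at some
invertible matrix. -/
theorem rho_attained (n : ℕ) (hn : 2 < n)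
    (q : (Fin n → ZMod 2) → ZMod 2) (hqnc : ∃ x y, q x ≠ q y)
    (f : (Fin n → ZMod 2) → ZMod 2) (hbal : wt f = 2 ^ (n - 1))
    (hnb : ∀ A : GL (Fin n) (ZMod 2), |Wq q f A.val| ≤ rho q) :
    ∃ A₀ : GL (Fin n) (ZMod 2), |Wq q f A₀.val| = rho q := by
  classical
  by_contra hcon
  push_neg at hcon
  have hf0 : imb f = 0 := imb_zero_of_balanced (by omega) f hbal
  have hkey := key_identity hn q f hf0
  set G : ℤ := (Fintype.card (GL (Fin n) (ZMod 2)) : ℤ) with hG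
  have hGpos : 0 < G := by
    rw [hG]
    exact_mod_cast Fintype.card_pos
  have hIq : (imb q) ^ 2 < 2 ^ (2 * n) := imb_sq_lt q hqnc
  set Mr : ℝ := ((2 : ℝ) ^ (2 * n) - (imb q : ℝ) ^ 2) / ((2 : ℝ) ^ n - 1) with hMr
  have hrhodef : rho q = ⌈Real.sqrt Mr⌉ := rfl
  have h2n1 : (0:ℝ) < (2:ℝ) ^ n - 1 := by
    have : (1:ℝ) < 2 ^ n := one_lt_pow₀ (by norm_num) (by omega)
    linarith
  have hMpos : 0 < Mr := by
    rw [hMr]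
    apply div_pos _ h2n1
    have : ((imb q : ℝ)) ^ 2 < (2:ℝ) ^ (2 * n) := by exact_mod_cast hIq
    linarith
  have hrho1 : 1 ≤ rho q := by
    rw [hrhodef]
    exact Int.ceil_pos.mpr (Real.sqrt_pos.mpr hMpos)
  have hbound : ∀ A : GL (Fin n) (ZMod 2), |Wq q f A.val| ≤ rho q - 1 := by
    intro A
    have h1 := lt_of_le_of_ne (hnb A) (hcon A)
    linarith
  have hsq : ∀ A : GL (Fin n) (ZMod 2), (Wq q f A.val) ^ 2 ≤ (rho q - 1) ^ 2 := by
    intro A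
    calc (Wq q f A.val) ^ 2 = |Wq q f A.val| ^ 2 := (sq_abs _).symm
    _ ≤ (rho q - 1) ^ 2 := pow_le_pow_left₀ (abs_nonneg _) (hbound A) 2
  have hsum : ∑ A : GL (Fin n) (ZMod 2), (Wq q f A.val) ^ 2 ≤ G * (rho q - 1) ^ 2 := by
    calc ∑ A : GL (Fin n) (ZMod 2), (Wq q f A.val) ^ 2
        ≤ ∑ _A : GL (Fin n) (ZMod 2), (rho q - 1) ^ 2 :=
          Finset.sum_le_sum fun A _ => hsq A
    _ = G * (rho q - 1) ^ 2 := by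
        rw [Finset.sum_const, nsmul_eq_mul, Finset.card_univ, hG]
  have hZ : G * ((2:ℤ) ^ (2 * n) - (imb q) ^ 2) ≤ ((2:ℤ) ^ n - 1) * (G * (rho q - 1) ^ 2) := by
    rw [← hkey]
    apply mul_le_mul_of_nonneg_left hsum
    have h1n : ((1:ℕ):ℤ) ≤ ((2 ^ n : ℕ):ℤ) := by exact_mod_cast Nat.one_le_two_pow
    push_cast at h1n
    linarith
  have hZ2 : (2:ℤ) ^ (2 * n) - (imb q) ^ 2 ≤ ((2:ℤ) ^ n - 1) * (rho q - 1) ^ 2 := by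
    have h1 : G * ((2:ℤ) ^ (2 * n) - (imb q) ^ 2)
        ≤ G * (((2:ℤ) ^ n - 1) * (rho q - 1) ^ 2) := by
      calc G * ((2:ℤ) ^ (2 * n) - (imb q) ^ 2)
          ≤ ((2:ℤ) ^ n - 1) * (G * (rho q - 1) ^ 2) := hZ
      _ = G * (((2:ℤ) ^ n - 1) * (rho q - 1) ^ 2) := by ring
    exact le_of_mul_le_mul_left h1 hGpos
  have hreal : ((2:ℝ) ^ (2 * n) - (imb q : ℝ) ^ 2)
      ≤ ((2:ℝ) ^ n - 1) * ((rho q : ℝ) - 1) ^ 2 := by exact_mod_cast hZ2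
  have hMle : Mr ≤ ((rho q : ℝ) - 1) ^ 2 := by
    rw [hMr, div_le_iff₀ h2n1]
    have hcomm : ((rho q : ℝ) - 1) ^ 2 * ((2:ℝ) ^ n - 1)
        = ((2:ℝ) ^ n - 1) * ((rho q : ℝ) - 1) ^ 2 := mul_comm _ _
    linarith
  have h0r : (0:ℝ) ≤ (rho q : ℝ) - 1 := by
    have : (1:ℝ) ≤ (rho q : ℝ) := by exact_mod_cast hrho1
    linarith
  have hsqrt : Real.sqrt Mr ≤ (rho q : ℝ) - 1 := by
    calc Real.sqrt Mr ≤ Real.sqrt (((rho q : ℝ) - 1) ^ 2) := Real.sqrt_le_sqrt hMle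
    _ = (rho q : ℝ) - 1 := Real.sqrt_sq h0r
  have hfin : rho q ≤ rho q - 1 := by
    rw [hrhodef]
    apply Int.ceil_le.mpr
    push_cast
    rw [← hrhodef]
    linarith
  omega
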